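/- arXiv:math/0302342 — 2 statements merged into one kernel-verified Lean document; each statement's English description precedes it below -/
import Mathlib

section
/- For every z ∈ ℂ and every k ∈ ℤ, the sequences s and t satisfy the three-term recurrence a_k s_{k+1}(z) + b_k s_k(z) + a_{k-1} s_{k-1}(z) = −z s_k(z) and a_k t_{k+1}(z) + b_k t_k(z) + a_{k-1} t_{k-1}(z) = −z t_k(z). -/
open Complex MeasureTheory

noncomputable section

/-- Pochhammer symbol `(a)_n`. -/
def poch (a : ℂ) (n : ℕ) : ℂ := ∏ i ∈ Finset.range n, (a + i)

/-- Confluent hypergeometric function `₁F₁(a;b;z)`. -/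
def hyp1F1 (a b z : ℂ) : ℂ := ∑' n : ℕ, poch a n * z ^ n / (poch b n * (n.factorial : ℂ))

/-- Second solution `U(a;b;z)` of the confluent hypergeometric equation (principal branch). -/
def USol (a b z : ℂ) : ℂ :=
  Complex.Gamma (1 - b) / Complex.Gamma (a - b + 1) * hyp1F1 a b z
  + Complex.Gamma (b - 1) / Complex.Gamma a * z ^ (1 - b) * hyp1F1 (a - b + 1) (2 - b) z

/-- `a_k = |k + ε + 1/2 + iρ|`. -/
def coefA (ρ ε : ℝ) (k : ℤ) : ℝ := ‖(k : ℂ) + (ε : ℂ) + 1/2 + I * (ρ : ℂ)‖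

/-- `b_k = 2(k + ε)`. -/
def coefB (ρ ε : ℝ) (k : ℤ) : ℝ := 2 * ((k : ℝ) + ε)

/-- The solution `s_k(z)`. -/
def sSol (ρ ε : ℝ) (k : ℤ) (z : ℂ) : ℂ :=
  (-1 : ℂ) ^ k * ((‖Complex.Gamma ((k : ℂ) + (ε : ℂ) + 1/2 + I * ρ)‖ : ℂ) /
      Complex.Gamma ((k : ℂ) + (ε : ℂ) + 1/2 - I * ρ)) *
    hyp1F1 ((k : ℂ) + (ε : ℂ) + 1/2 + I * ρ) (1 + 2 * I * ρ) z

/-- The solution `t_k(z)`. -/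
def tSol (ρ ε : ℝ) (k : ℤ) (z : ℂ) : ℂ :=
  ((‖Complex.Gamma (1/2 - (k : ℂ) - (ε : ℂ) - I * ρ)‖ : ℂ) /
      Complex.Gamma (1/2 - (k : ℂ) - (ε : ℂ) + I * ρ)) *
    hyp1F1 (1/2 - (k : ℂ) - (ε : ℂ) - I * ρ) (1 - 2 * I * ρ) (-z)

/-- The solution `u_k(z)`, for `z ∉ (-∞,0]`. -/
def uSol (ρ ε : ℝ) (k : ℤ) (z : ℂ) : ℂ :=
  (-1 : ℂ) ^ k * (‖Complex.Gamma ((k : ℂ) + (ε : ℂ) + 1/2 + I * ρ)‖ : ℂ) *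
    USol ((k : ℂ) + (ε : ℂ) + 1/2 + I * ρ) (1 + 2 * I * ρ) z

/-- The solution `v_k(z)`, for `z ∉ [0,∞)`. -/
def vSol (ρ ε : ℝ) (k : ℤ) (z : ℂ) : ℂ :=
  (‖Complex.Gamma (1/2 - (k : ℂ) - (ε : ℂ) - I * ρ)‖ : ℂ) *
    USol (1/2 - (k : ℂ) - (ε : ℂ) - I * ρ) (1 - 2 * I * ρ) (-z)

namespace LagAux

def term (a b z : ℂ) (n : ℕ) : ℂ := poch a n * z ^ n / (poch b n * (n.factorial : ℂ))

lemma hyp1F1_eq (a b z : ℂ) : hyp1F1 a b z = ∑' n, term a b z n := rfl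

lemma poch_zero (a : ℂ) : poch a 0 = 1 := by simp [poch]

lemma poch_succ (a : ℂ) (n : ℕ) : poch a (n+1) = poch a n * (a + n) :=
  Finset.prod_range_succ _ _

lemma poch_succ' (a : ℂ) (n : ℕ) : poch a (n+1) = a * poch (a+1) n := by
  rw [poch, Finset.prod_range_succ']
  simp only [Nat.cast_zero, add_zero]
  rw [mul_comm, poch]
  congr 1
  refine Finset.prod_congr rfl fun i _ => ?_
  push_cast
  ring

lemma poch_ne_zero {b : ℂ} (hb : b.im ≠ 0) (n : ℕ) : poch b n ≠ 0 := by
  refine Finset.prod_ne_zero_iff.mpr fun i _ h => hb ?_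
  have := congrArg Complex.im h
  simpa using this

lemma abs_poch_le (a : ℂ) {b : ℂ} (hb : b.im ≠ 0) (n : ℕ) :
    ‖poch a n‖ ≤ (1 + ‖a - b‖ / |b.im|) ^ n * ‖poch b n‖ := by
  induction n with
  | zero => simp [poch_zero]
  | succ n ih =>
    rw [poch_succ, poch_succ, norm_mul, norm_mul, pow_succ]
    have hbim : 0 < |b.im| := abs_pos.mpr hb
    have h1 : |b.im| ≤ ‖b + n‖ := by
      calc |b.im| = |(b + (n:ℂ)).im| := by simp
        _ ≤ ‖b + n‖ := Complex.abs_im_le_norm _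
    have h2 : ‖a + n‖ ≤ (1 + ‖a - b‖ / |b.im|) * ‖b + n‖ := by
      have h3 : ‖a + n‖ ≤ ‖b + n‖ + ‖a - b‖ := by
        calc ‖a + n‖ = ‖(b + n) + (a - b)‖ := by ring_nf
          _ ≤ _ := norm_add_le _ _
      have h4 : ‖a - b‖ = (‖a - b‖ / |b.im|) * |b.im| := by
        field_simp
      have h5 : (‖a - b‖ / |b.im|) * |b.im| ≤ (‖a - b‖ / |b.im|) * ‖b + n‖ :=
        mul_le_mul_of_nonneg_left h1 (by positivity)
      calc ‖a + n‖ ≤ ‖b + n‖ + ‖a - b‖ := h3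
        _ ≤ ‖b + n‖ + (‖a - b‖ / |b.im|) * ‖b + n‖ := by
            linarith
        _ = (1 + ‖a - b‖ / |b.im|) * ‖b + n‖ := by ring
    calc ‖poch a n‖ * ‖a + n‖
        ≤ ((1 + ‖a - b‖ / |b.im|) ^ n * ‖poch b n‖) *
          ((1 + ‖a - b‖ / |b.im|) * ‖b + n‖) := by
          exact mul_le_mul ih h2 (norm_nonneg _) (by positivity)
      _ = (1 + ‖a - b‖ / |b.im|) ^ n * (1 + ‖a - b‖ / |b.im|) *
          (‖poch b n‖ * ‖b + n‖) := by ring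

lemma summable_term (a b z : ℂ) (hb : b.im ≠ 0) : Summable (term a b z) := by
  set C := 1 + ‖a - b‖ / |b.im| with hC
  have hC0 : 0 ≤ C := by positivity
  refine Summable.of_norm ?_
  refine Summable.of_nonneg_of_le (fun n => norm_nonneg _) (fun n => ?_)
    (Real.summable_pow_div_factorial (C * ‖z‖))
  have hpb : 0 < ‖poch b n‖ := by
    simpa using (norm_pos_iff.mpr (poch_ne_zero hb n))
  have hfact : (0:ℝ) < n.factorial := by positivity
  rw [term]
  rw [norm_div, norm_mul, norm_mul, norm_pow]
  rw [show ‖(n.factorial : ℂ)‖ = (n.factorial : ℝ) by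
    simpa using Complex.norm_natCast n.factorial]
  rw [mul_pow]
  rw [div_le_div_iff₀ (by positivity) (by positivity)]
  calc ‖poch a n‖ * ‖z‖ ^ n * (n.factorial : ℝ)
      ≤ (C ^ n * ‖poch b n‖) * ‖z‖ ^ n * (n.factorial : ℝ) := by
        have hz : (0:ℝ) ≤ ‖z‖ ^ n := by positivity
        have h6 := mul_le_mul_of_nonneg_right
          (mul_le_mul_of_nonneg_right (abs_poch_le a hb n) hz) hfact.le
        calc ‖poch a n‖ * ‖z‖ ^ n * (n.factorial : ℝ)
            ≤ (1 + ‖a - b‖ / |b.im|) ^ n * ‖poch b n‖ *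
              ‖z‖ ^ n * (n.factorial : ℝ) := h6
          _ = C ^ n * ‖poch b n‖ * ‖z‖ ^ n * (n.factorial : ℝ) := by
              rw [hC]
    _ = C ^ n * ‖z‖ ^ n * (‖poch b n‖ * (n.factorial : ℝ)) := by ring

end LagAux

namespace LagAux

lemma term_zero (a b z : ℂ) : term a b z 0 = 1 := by
  simp [term, poch_zero]

lemma key (a b z c1 c3 : ℂ) (hb : b.im ≠ 0)
    (h0 : c1 + (b - 2*a) + c3 = 0)
    (hrec : ∀ n : ℕ, c1 * term (a+1) b z (n+1) + (b - 2*a) * term a b z (n+1)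
      + c3 * term (a-1) b z (n+1) = z * term a b z n) :
    c1 * hyp1F1 (a+1) b z + (b - 2*a) * hyp1F1 a b z + c3 * hyp1F1 (a-1) b z
      = z * hyp1F1 a b z := by
  have S1 := summable_term (a+1) b z hb
  have S2 := summable_term a b z hb
  have S3 := summable_term (a-1) b z hb
  have hh : Summable (fun n => c1 * term (a+1) b z n + (b-2*a) * term a b z n
      + c3 * term (a-1) b z n) :=
    ((S1.mul_left c1).add (S2.mul_left _)).add (S3.mul_left c3)
  have e1 : c1 * hyp1F1 (a+1) b z + (b-2*a) * hyp1F1 a b z + c3 * hyp1F1 (a-1) b z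
      = ∑' n, (c1 * term (a+1) b z n + (b-2*a) * term a b z n + c3 * term (a-1) b z n) := by
    rw [Summable.tsum_add ((S1.mul_left c1).add (S2.mul_left _)) (S3.mul_left c3),
        Summable.tsum_add (S1.mul_left c1) (S2.mul_left _), tsum_mul_left, tsum_mul_left, tsum_mul_left,
        hyp1F1_eq, hyp1F1_eq, hyp1F1_eq]
  rw [e1, Summable.tsum_eq_zero_add hh]
  have hz0 : c1 * term (a+1) b z 0 + (b-2*a) * term a b z 0 + c3 * term (a-1) b z 0 = 0 := by
    rw [term_zero, term_zero, term_zero]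
    linear_combination h0
  rw [hz0, zero_add, tsum_congr hrec, tsum_mul_left, hyp1F1_eq]

lemma claim1 (a b z : ℂ) (hb : b.im ≠ 0) :
    a * hyp1F1 (a+1) b z + (b - 2*a) * hyp1F1 a b z + (a - b) * hyp1F1 (a-1) b z
      = z * hyp1F1 a b z := by
  refine key a b z a (a-b) hb (by ring) fun n => ?_
  have hbn : poch b n ≠ 0 := poch_ne_zero hb n
  have hfact : ((n.factorial : ℂ)) ≠ 0 := Nat.cast_ne_zero.mpr n.factorial_ne_zero
  have hDn1 : poch b (n+1) * (((n+1).factorial : ℕ) : ℂ) ≠ 0 :=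
    mul_ne_zero (poch_ne_zero hb _) (Nat.cast_ne_zero.mpr (n+1).factorial_ne_zero)
  have hD0 : poch b n * ((n.factorial : ℕ) : ℂ) ≠ 0 := mul_ne_zero hbn hfact
  have hB : poch a (n+1) = poch a n * (a + n) := poch_succ a n
  have hD : poch b (n+1) = poch b n * (b + n) := poch_succ b n
  have hC : poch (a-1) (n+1) = (a-1) * poch a n := by
    rw [poch_succ']
    congr 1
    rw [sub_add_cancel]
  have h2 : poch a (n+1+1) = poch a n * (a+(n:ℂ)) * (a+((n+1:ℕ):ℂ)) := by
    rw [poch_succ a (n+1), poch_succ a n]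
  have h1 : a * poch (a+1) (n+1) = poch a n * ((a+(n:ℂ)) * (a+(n:ℂ)+1)) := by
    have h3 := poch_succ' a (n+1)
    rw [h2] at h3
    push_cast at h3
    linear_combination -h3
  have eL : a * term (a+1) b z (n+1) + (b-2*a) * term a b z (n+1)
        + (a-b) * term (a-1) b z (n+1)
      = (a * poch (a+1) (n+1) + (b-2*a) * poch a (n+1) + (a-b) * poch (a-1) (n+1)) * z^(n+1)
        / (poch b (n+1) * (((n+1).factorial : ℕ) : ℂ)) := by
    simp only [term]
    ring
  have eR : z * term a b z n = poch a n * z^(n+1) / (poch b n * ((n.factorial : ℕ) : ℂ)) := by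
    simp only [term]
    ring
  rw [eL, eR, div_eq_div_iff hDn1 hD0]
  rw [hC, hB, hD, Nat.factorial_succ]
  push_cast
  linear_combination (z^(n+1) * poch b n * ((n.factorial : ℕ) : ℂ)) * h1

end LagAux

namespace LagAux

lemma ne_zero_of_im {w : ℂ} (him : w.im ≠ 0) : w ≠ 0 := by
  intro h; apply him; rw [h]; simp

lemma Gamma_ne_zero_of_im {w : ℂ} (him : w.im ≠ 0) : Complex.Gamma w ≠ 0 := by
  apply Complex.Gamma_ne_zero
  intro m h
  apply him
  have := congrArg Complex.im h
  simpa using this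

lemma mini1 (w w' : ℂ) (him : w.im ≠ 0) (hw' : w' = (starRingEnd ℂ) w) :
    (‖w‖ : ℂ) * ((‖Complex.Gamma (w+1)‖ : ℂ) / Complex.Gamma (w'+1))
      = w * ((‖Complex.Gamma w‖ : ℂ) / Complex.Gamma w') := by
  have hw'im : w'.im ≠ 0 := by rw [hw']; simpa using him
  have hw0 : w ≠ 0 := ne_zero_of_im him
  have hw'0 : w' ≠ 0 := ne_zero_of_im hw'im
  have hG : Complex.Gamma w' ≠ 0 := Gamma_ne_zero_of_im hw'im
  have habs : (‖w‖ : ℂ) * (‖w‖ : ℂ) = w * w' := by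
    rw [hw']
    rw [← Complex.ofReal_mul, ← sq, Complex.sq_norm, Complex.mul_conj]
  rw [Complex.Gamma_add_one w hw0, Complex.Gamma_add_one w' hw'0, norm_mul]
  push_cast
  field_simp
  ring_nf
  linear_combination ((‖Complex.Gamma w‖) : ℂ) * habs

lemma mini2 (w w' : ℂ) (him : w.im ≠ 0) (hw' : w' = (starRingEnd ℂ) w) :
    (‖w-1‖ : ℂ) *
      ((‖Complex.Gamma (w-1)‖ : ℂ) / Complex.Gamma (w'-1))
      = (w' - 1) * ((‖Complex.Gamma w‖ : ℂ) / Complex.Gamma w') := by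
  have hm1im : (w-1).im ≠ 0 := by simpa using him
  have hw'im : w'.im ≠ 0 := by rw [hw']; simpa using him
  have hm1'im : (w'-1).im ≠ 0 := by simpa using hw'im
  have hm10 : w - 1 ≠ 0 := ne_zero_of_im hm1im
  have hm1'0 : w' - 1 ≠ 0 := ne_zero_of_im hm1'im
  have hG1 : Complex.Gamma (w'-1) ≠ 0 := Gamma_ne_zero_of_im hm1'im
  have habs1 : ‖w-1‖ ≠ 0 := norm_ne_zero_iff.mpr hm10
  have hGw : Complex.Gamma w = (w-1) * Complex.Gamma (w-1) := by
    have := Complex.Gamma_add_one (w-1) hm10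
    rwa [sub_add_cancel] at this
  have hGw' : Complex.Gamma w' = (w'-1) * Complex.Gamma (w'-1) := by
    have := Complex.Gamma_add_one (w'-1) hm1'0
    rwa [sub_add_cancel] at this
  rw [hGw, hGw', norm_mul]
  push_cast
  field_simp

end LagAux

namespace LagAux

lemma conj_aux (x ρ : ℝ) : ((x:ℂ) - I*ρ) = (starRingEnd ℂ) ((x:ℂ) + I*ρ) := by
  rw [map_add, map_mul, Complex.conj_ofReal, Complex.conj_I, Complex.conj_ofReal]
  ring

lemma im_aux (x ρ : ℝ) : ((x:ℂ) + I*ρ).im = ρ := by simp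

lemma im_aux2 (x ρ : ℝ) : ((x:ℂ) - I*ρ).im = -ρ := by simp

lemma s_recur (ρ x : ℝ) (hρ : ρ ≠ 0) (z : ℂ) :
    (‖(x:ℂ) + I*ρ‖ : ℂ) *
      ((‖Complex.Gamma ((x:ℂ) + I*ρ + 1)‖ : ℂ) / Complex.Gamma ((x:ℂ) - I*ρ + 1)
        * hyp1F1 ((x:ℂ) + I*ρ + 1) (1+2*I*ρ) z)
    - (2*(x:ℂ) - 1) *
      ((‖Complex.Gamma ((x:ℂ) + I*ρ)‖ : ℂ) / Complex.Gamma ((x:ℂ) - I*ρ)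
        * hyp1F1 ((x:ℂ) + I*ρ) (1+2*I*ρ) z)
    + (‖(x:ℂ) + I*ρ - 1‖ : ℂ) *
      ((‖Complex.Gamma ((x:ℂ) + I*ρ - 1)‖ : ℂ) / Complex.Gamma ((x:ℂ) - I*ρ - 1)
        * hyp1F1 ((x:ℂ) + I*ρ - 1) (1+2*I*ρ) z)
    = z * ((‖Complex.Gamma ((x:ℂ) + I*ρ)‖ : ℂ) / Complex.Gamma ((x:ℂ) - I*ρ)
        * hyp1F1 ((x:ℂ) + I*ρ) (1+2*I*ρ) z) := by
  have him : ((x:ℂ) + I*ρ).im ≠ 0 := by rw [im_aux]; exact hρ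
  have hbim : ((1:ℂ)+2*I*ρ).im ≠ 0 := by
    simpa using mul_ne_zero two_ne_zero hρ
  have m1 := mini1 ((x:ℂ) + I*ρ) ((x:ℂ) - I*ρ) him (conj_aux x ρ)
  have m2 := mini2 ((x:ℂ) + I*ρ) ((x:ℂ) - I*ρ) him (conj_aux x ρ)
  have hc := claim1 ((x:ℂ) + I*ρ) (1+2*I*ρ) z hbim
  linear_combination hyp1F1 ((x:ℂ) + I*ρ + 1) (1+2*I*ρ) z * m1
    + hyp1F1 ((x:ℂ) + I*ρ - 1) (1+2*I*ρ) z * m2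
    + ((‖Complex.Gamma ((x:ℂ) + I*ρ)‖ : ℂ) / Complex.Gamma ((x:ℂ) - I*ρ)) * hc

lemma t_recur (ρ y : ℝ) (hρ : ρ ≠ 0) (z : ℂ) :
    (‖(1:ℂ) - y + I*ρ‖ : ℂ) *
      ((‖Complex.Gamma ((y:ℂ) - I*ρ - 1)‖ : ℂ) / Complex.Gamma ((y:ℂ) + I*ρ - 1)
        * hyp1F1 ((y:ℂ) - I*ρ - 1) (1-2*I*ρ) (-z))
    + (1 - 2*(y:ℂ)) *
      ((‖Complex.Gamma ((y:ℂ) - I*ρ)‖ : ℂ) / Complex.Gamma ((y:ℂ) + I*ρ)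
        * hyp1F1 ((y:ℂ) - I*ρ) (1-2*I*ρ) (-z))
    + (‖-(y:ℂ) + I*ρ‖ : ℂ) *
      ((‖Complex.Gamma ((y:ℂ) - I*ρ + 1)‖ : ℂ) / Complex.Gamma ((y:ℂ) + I*ρ + 1)
        * hyp1F1 ((y:ℂ) - I*ρ + 1) (1-2*I*ρ) (-z))
    = -z * ((‖Complex.Gamma ((y:ℂ) - I*ρ)‖ : ℂ) / Complex.Gamma ((y:ℂ) + I*ρ)
        * hyp1F1 ((y:ℂ) - I*ρ) (1-2*I*ρ) (-z)) := by
  have him : ((y:ℂ) - I*ρ).im ≠ 0 := by rw [im_aux2]; simpa using hρ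
  have hconj : ((y:ℂ) + I*ρ) = (starRingEnd ℂ) ((y:ℂ) - I*ρ) := by
    rw [map_sub, map_mul, Complex.conj_ofReal, Complex.conj_I, Complex.conj_ofReal]
    ring
  have hbim : ((1:ℂ)-2*I*ρ).im ≠ 0 := by
    simpa using mul_ne_zero two_ne_zero hρ
  have e1 : ((1:ℂ) - y + I*ρ) = -((y:ℂ) - I*ρ - 1) := by ring
  have e2 : (-(y:ℂ) + I*ρ) = -((y:ℂ) - I*ρ) := by ring
  rw [e1, e2, norm_neg, norm_neg]
  have m1 := mini1 ((y:ℂ) - I*ρ) ((y:ℂ) + I*ρ) him hconj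
  have m2 := mini2 ((y:ℂ) - I*ρ) ((y:ℂ) + I*ρ) him hconj
  have hc := claim1 ((y:ℂ) - I*ρ) (1-2*I*ρ) (-z) hbim
  linear_combination hyp1F1 ((y:ℂ) - I*ρ + 1) (1-2*I*ρ) (-z) * m1
    + hyp1F1 ((y:ℂ) - I*ρ - 1) (1-2*I*ρ) (-z) * m2
    + ((‖Complex.Gamma ((y:ℂ) - I*ρ)‖ : ℂ) / Complex.Gamma ((y:ℂ) + I*ρ)) * hc

end LagAux


/-- the sequences `s_k(z)` and `t_k(z)` satisfy the three-term recurrence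
`a_k f_{k+1} + b_k f_k + a_{k-1} f_{k-1} = -z f_k`. -/
theorem laguerre_s_t_recurrence (ρ ε : ℝ) (hρ : 0 < ρ) (hε : ε ∈ Set.Ico (0 : ℝ) 1)
    (z : ℂ) (k : ℤ) :
    (coefA ρ ε k : ℂ) * sSol ρ ε (k + 1) z + (coefB ρ ε k : ℂ) * sSol ρ ε k z +
        (coefA ρ ε (k - 1) : ℂ) * sSol ρ ε (k - 1) z = -z * sSol ρ ε k z ∧
    (coefA ρ ε k : ℂ) * tSol ρ ε (k + 1) z + (coefB ρ ε k : ℂ) * tSol ρ ε k z +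
        (coefA ρ ε (k - 1) : ℂ) * tSol ρ ε (k - 1) z = -z * tSol ρ ε k z := by
  have hρ' : ρ ≠ 0 := ne_of_gt hρ
  constructor
  · have hs := LagAux.s_recur ρ ((k:ℝ) + ε + 1/2) hρ' z
    have p1 : ((-1:ℂ)) ^ (k+1) = -((-1:ℂ))^k := by
      rw [zpow_add₀ (by norm_num : (-1:ℂ) ≠ 0)]
      simp
    have p2 : ((-1:ℂ)) ^ (k-1) = -((-1:ℂ))^k := by
      rw [sub_eq_add_neg, zpow_add₀ (by norm_num : (-1:ℂ) ≠ 0)]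
      norm_num
    simp only [sSol, coefA, coefB, p1, p2]
    push_cast at hs ⊢
    ring_nf at hs ⊢
    linear_combination (-((-1:ℂ)^k)) * hs
  · have ht := LagAux.t_recur ρ (1/2 - (k:ℝ) - ε) hρ' z
    simp only [tSol, coefA, coefB]
    push_cast at ht ⊢
    ring_nf at ht ⊢
    linear_combination ht
end
end

section
/- For every k ∈ ℤ: if z ∈ ℂ ∖ (−∞,0] then a_k u_{k+1}(z) + b_k u_k(z) + a_{k-1} u_{k-1}(z) = −z u_k(z), and if z ∈ ℂ ∖ [0,∞) then a_k v_{k+1}(z) + b_k v_k(z) + a_{k-1} v_{k-1}(z) = −z v_k(z). -/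
open Complex MeasureTheory

noncomputable section

namespace LagRecAux

lemma poch_succ (a : ℂ) (n : ℕ) : poch a (n+1) = poch a n * (a + n) :=
  Finset.prod_range_succ _ n

lemma poch_shift (a : ℂ) (n : ℕ) : a * poch (a+1) n = poch a n * (a + n) := by
  rw [← poch_succ]; unfold poch
  rw [Finset.prod_range_succ']
  simp only [Nat.cast_zero, add_zero]
  rw [mul_comm]; congr 1
  exact Finset.prod_congr rfl (fun i _ => by push_cast; ring)

lemma poch_pred (a : ℂ) (n : ℕ) : poch (a-1) (n+1) = (a-1) * poch a n := by
  unfold poch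
  rw [Finset.prod_range_succ']
  simp only [Nat.cast_zero, add_zero]
  rw [mul_comm]; congr 1
  exact Finset.prod_congr rfl (fun i _ => by push_cast; ring)

lemma poch_ne_zero {b : ℂ} (hb : ∀ n : ℕ, b + (n:ℂ) ≠ 0) (n : ℕ) : poch b n ≠ 0 :=
  Finset.prod_ne_zero_iff.mpr (fun i _ => hb i)

/-- single term of the ₁F₁ series -/
def hterm (a b z : ℂ) (n : ℕ) : ℂ := poch a n * z ^ n / (poch b n * (n.factorial : ℂ))

lemma hyp1F1_eq (a b z : ℂ) : hyp1F1 a b z = ∑' n, hterm a b z n := rfl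

lemma hterm_step (a b z : ℂ) (n : ℕ) :
    hterm a b z (n+1) = hterm a b z n * ((a + n) * z / ((b + n) * (n+1))) := by
  unfold hterm
  rw [poch_succ, poch_succ, pow_succ, Nat.factorial_succ]
  rw [div_mul_div_comm]
  push_cast
  ring_nf

open Filter in
lemma summable_hterm (a b z : ℂ) : Summable (hterm a b z) := by
  apply summable_of_ratio_norm_eventually_le (r := 1/2) (by norm_num)
  have hN : ∀ᶠ n : ℕ in atTop, (2*‖b‖ + ‖a‖ + 8*‖z‖ + 2 : ℝ) ≤ n :=
    (tendsto_natCast_atTop_atTop (R := ℝ)).eventually_ge_atTop _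
  filter_upwards [hN] with n hn
  rw [hterm_step, norm_mul]
  have hA : ‖a‖ ≥ 0 := norm_nonneg a
  have hB : ‖b‖ ≥ 0 := norm_nonneg b
  have hZ : ‖z‖ ≥ 0 := norm_nonneg z
  have h1 : ‖a + (n:ℂ)‖ ≤ ‖a‖ + n := by
    simpa using norm_add_le a (n:ℂ)
  have h2 : (n:ℝ) - ‖b‖ ≤ ‖b + (n:ℂ)‖ := by
    have := norm_add_le (b + (n:ℂ)) (-b)
    rw [show b + (n:ℂ) + -b = (n:ℂ) by ring] at this
    simpa using sub_le_iff_le_add.mpr this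
  have hden : (0:ℝ) < ‖(b + (n:ℂ)) * ((n:ℂ)+1)‖ := by
    rw [norm_mul]
    have hb' : (0:ℝ) < ‖b + (n:ℂ)‖ := lt_of_lt_of_le (by nlinarith) h2
    have h0 : ((n:ℝ)+1) ≠ 0 := by positivity
    have : ((n:ℂ)+1) ≠ 0 := by exact_mod_cast h0
    have : (0:ℝ) < ‖(n:ℂ)+1‖ := by simpa [norm_pos_iff] using this
    positivity
  have hratio : ‖(a + (n:ℂ)) * z / ((b + (n:ℂ)) * ((n:ℂ)+1))‖ ≤ 1/2 := by
    rw [norm_div, div_le_iff₀ hden, norm_mul, norm_mul]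
    have hn1 : ‖(n:ℂ)+1‖ = (n:ℝ)+1 := by
      have : ((n:ℂ)+1) = ((n+1 : ℕ) : ℂ) := by push_cast; ring
      rw [this, Complex.norm_natCast]; push_cast; ring
    rw [hn1]
    have hZn : ‖z‖ = ‖z‖ := rfl
    rw [hZn]
    nlinarith [mul_le_mul_of_nonneg_right h1 hZ,
      mul_le_mul_of_nonneg_right h2 (by nlinarith : (0:ℝ) ≤ (n:ℝ)+1),
      mul_nonneg hZ (by positivity : (0:ℝ) ≤ (n:ℝ)), norm_nonneg (a + (n:ℂ))]
  calc ‖hterm a b z n‖ * ‖(a + (n:ℂ)) * z / ((b + (n:ℂ)) * ((n:ℂ)+1))‖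
      ≤ ‖hterm a b z n‖ * (1/2) := mul_le_mul_of_nonneg_left hratio (norm_nonneg _)
    _ = 1/2 * ‖hterm a b z n‖ := by ring

lemma crec (a b z : ℂ) (hb : ∀ n : ℕ, b + (n:ℂ) ≠ 0) (n : ℕ) :
    a * hterm (a+1) b z (n+1) - (b-a) * hterm (a-1) b z (n+1) - (2*a-b) * hterm a b z (n+1)
      = z * hterm a b z n := by
  have e1 : a * hterm (a+1) b z (n+1)
      = poch a n * (a+n) * (a+n+1) * z^(n+1) / (poch b (n+1) * ((n+1).factorial : ℂ)) := by
    unfold hterm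
    rw [← mul_div_assoc, ← mul_assoc, poch_shift, poch_succ]
    push_cast; ring
  rw [e1]
  unfold hterm
  rw [poch_pred, poch_succ a, poch_succ b, Nat.factorial_succ]
  have hQ : poch b n ≠ 0 := poch_ne_zero hb n
  have hbn : b + (n:ℂ) ≠ 0 := hb n
  have hf : ((n.factorial : ℂ)) ≠ 0 := by exact_mod_cast n.factorial_ne_zero
  have hn1 : ((n:ℂ)+1) ≠ 0 := by
    have h0 : ((n:ℝ)+1) ≠ 0 := by positivity
    exact_mod_cast h0
  field_simp
  push_cast; ring

lemma hyp1F1_rec (a b z : ℂ) (hb : ∀ n : ℕ, b + (n:ℂ) ≠ 0) :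
    (b - a) * hyp1F1 (a-1) b z + (2*a - b + z) * hyp1F1 a b z - a * hyp1F1 (a+1) b z = 0 := by
  have h1 := summable_hterm (a+1) b z
  have h2 := summable_hterm (a-1) b z
  have h3 := summable_hterm a b z
  have hc : Summable (fun n => a * hterm (a+1) b z n - (b-a) * hterm (a-1) b z n
      - (2*a-b) * hterm a b z n) :=
    ((h1.mul_left a).sub (h2.mul_left (b-a))).sub (h3.mul_left (2*a-b))
  have hL : (∑' n, (a * hterm (a+1) b z n - (b-a) * hterm (a-1) b z n
      - (2*a-b) * hterm a b z n))
      = a * hyp1F1 (a+1) b z - (b-a) * hyp1F1 (a-1) b z - (2*a-b) * hyp1F1 a b z := by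
    rw [hyp1F1_eq, hyp1F1_eq, hyp1F1_eq, ← tsum_mul_left, ← tsum_mul_left, ← tsum_mul_left,
      ← Summable.tsum_sub (h1.mul_left a) (h2.mul_left (b-a)),
      ← Summable.tsum_sub ((h1.mul_left a).sub (h2.mul_left (b-a))) (h3.mul_left (2*a-b))]
  have hR : (∑' n, (a * hterm (a+1) b z n - (b-a) * hterm (a-1) b z n
      - (2*a-b) * hterm a b z n)) = z * hyp1F1 a b z := by
    rw [Summable.tsum_eq_zero_add hc]
    have hc0 : a * hterm (a+1) b z 0 - (b-a) * hterm (a-1) b z 0 - (2*a-b) * hterm a b z 0 = 0 := by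
      simp [hterm, poch]; ring
    rw [hc0, zero_add, tsum_congr (crec a b z hb), tsum_mul_left, ← hyp1F1_eq]
  linear_combination - (hL.symm.trans hR)

lemma USol_rec (a b z : ℂ)
    (hb : ∀ n : ℕ, b + (n:ℂ) ≠ 0) (hb2 : ∀ n : ℕ, 2 - b + (n:ℂ) ≠ 0)
    (ha1 : ∀ m : ℕ, a - 1 + (m:ℂ) ≠ 0) (hab : ∀ m : ℕ, a - b + (m:ℂ) ≠ 0) :
    USol (a-1) b z + (b - 2*a - z) * USol a b z + a*(a-b+1) * USol (a+1) b z = 0 := by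
  have ha1ne : ∀ m : ℕ, (a - 1 : ℂ) ≠ -m := by
    intro m; have := ha1 m; intro h; apply this; rw [h]; ring
  have habne : ∀ m : ℕ, (a - b : ℂ) ≠ -m := by
    intro m; have := hab m; intro h; apply this; rw [h]; ring
  have hG1 : Complex.Gamma (a-1) ≠ 0 := Complex.Gamma_ne_zero ha1ne
  have hGab : Complex.Gamma (a-b) ≠ 0 := Complex.Gamma_ne_zero habne
  have h0 : a ≠ 0 := by have := ha1 1; intro h; apply this; rw [h]; push_cast; ring
  have h1 : a - 1 ≠ 0 := by have := ha1 0; simpa using this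
  have hab0 : a - b ≠ 0 := by have := hab 0; simpa using this
  have hab1 : a - b + 1 ≠ 0 := by have := hab 1; simpa using this
  have hg1 : Complex.Gamma (a - b + 1) = (a-b) * Complex.Gamma (a-b) :=
    Complex.Gamma_add_one _ hab0
  have hg2 : Complex.Gamma (a - b + 2) = (a-b+1) * ((a-b) * Complex.Gamma (a-b)) := by
    rw [show a - b + 2 = (a - b + 1) + 1 from by ring, Complex.Gamma_add_one _ hab1, hg1]
  have hg3 : Complex.Gamma a = (a-1) * Complex.Gamma (a-1) := by
    have := Complex.Gamma_add_one (a-1) h1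
    rwa [sub_add_cancel] at this
  have hg4 : Complex.Gamma (a+1) = a * ((a-1) * Complex.Gamma (a-1)) := by
    rw [Complex.Gamma_add_one a h0, hg3]
  have hM1 := hyp1F1_rec a b z hb
  have hM2 := hyp1F1_rec (a-b+1) (2-b) z hb2
  rw [show a - b + 1 - 1 = a - b from by ring, show a - b + 1 + 1 = a - b + 2 from by ring] at hM2
  have bracket1 : (a-b) * hyp1F1 (a-1) b z + (b - 2*a - z) * hyp1F1 a b z
      + a * hyp1F1 (a+1) b z = 0 := by linear_combination -hM1
  have bracket2 : (a-1) * hyp1F1 (a-b) (2-b) z + (b - 2*a - z) * hyp1F1 (a-b+1) (2-b) z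
      + (a-b+1) * hyp1F1 (a-b+2) (2-b) z = 0 := by linear_combination -hM2
  have key1 : Complex.Gamma (1-b) / Complex.Gamma (a-b) * hyp1F1 (a-1) b z
      + (b - 2*a - z) * (Complex.Gamma (1-b) / Complex.Gamma (a-b+1) * hyp1F1 a b z)
      + a*(a-b+1) * (Complex.Gamma (1-b) / Complex.Gamma (a-b+2) * hyp1F1 (a+1) b z) = 0 := by
    have e : Complex.Gamma (1-b) / Complex.Gamma (a-b) * hyp1F1 (a-1) b z
        + (b - 2*a - z) * (Complex.Gamma (1-b) / Complex.Gamma (a-b+1) * hyp1F1 a b z)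
        + a*(a-b+1) * (Complex.Gamma (1-b) / Complex.Gamma (a-b+2) * hyp1F1 (a+1) b z)
        = Complex.Gamma (1-b) / ((a-b) * Complex.Gamma (a-b)) *
          ((a-b) * hyp1F1 (a-1) b z + (b - 2*a - z) * hyp1F1 a b z + a * hyp1F1 (a+1) b z) := by
      rw [hg1, hg2]
      field_simp
    rw [e, bracket1, mul_zero]
  have key2 : Complex.Gamma (b-1) / Complex.Gamma (a-1) * z^(1-b) * hyp1F1 (a-b) (2-b) z
      + (b - 2*a - z) * (Complex.Gamma (b-1) / Complex.Gamma a * z^(1-b) * hyp1F1 (a-b+1) (2-b) z)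
      + a*(a-b+1) * (Complex.Gamma (b-1) / Complex.Gamma (a+1) * z^(1-b) * hyp1F1 (a-b+2) (2-b) z)
      = 0 := by
    have e : Complex.Gamma (b-1) / Complex.Gamma (a-1) * z^(1-b) * hyp1F1 (a-b) (2-b) z
        + (b - 2*a - z) * (Complex.Gamma (b-1) / Complex.Gamma a * z^(1-b) * hyp1F1 (a-b+1) (2-b) z)
        + a*(a-b+1) * (Complex.Gamma (b-1) / Complex.Gamma (a+1) * z^(1-b) * hyp1F1 (a-b+2) (2-b) z)
        = Complex.Gamma (b-1) / ((a-1) * Complex.Gamma (a-1)) * z^(1-b) *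
          ((a-1) * hyp1F1 (a-b) (2-b) z + (b - 2*a - z) * hyp1F1 (a-b+1) (2-b) z
            + (a-b+1) * hyp1F1 (a-b+2) (2-b) z) := by
      rw [hg3, hg4]
      field_simp
    rw [e, bracket2, mul_zero]
  unfold USol
  rw [show a - 1 - b + 1 = a - b from by ring, show a + 1 - b + 1 = a - b + 2 from by ring]
  linear_combination key1 + key2

end LagRecAux

/-- the sequences `u_k(z)` (for `z ∉ (-∞,0]`) and `v_k(z)` (for `z ∉ [0,∞)`)
satisfy the three-term recurrence `a_k f_{k+1} + b_k f_k + a_{k-1} f_{k-1} = -z f_k`. -/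
theorem laguerre_u_v_recurrence (ρ ε : ℝ) (hρ : 0 < ρ) (hε : ε ∈ Set.Ico (0 : ℝ) 1)
    (z : ℂ) (k : ℤ) :
    (¬(z.im = 0 ∧ z.re ≤ 0) →
      (coefA ρ ε k : ℂ) * uSol ρ ε (k + 1) z + (coefB ρ ε k : ℂ) * uSol ρ ε k z +
        (coefA ρ ε (k - 1) : ℂ) * uSol ρ ε (k - 1) z = -z * uSol ρ ε k z) ∧
    (¬(z.im = 0 ∧ 0 ≤ z.re) →
      (coefA ρ ε k : ℂ) * vSol ρ ε (k + 1) z + (coefB ρ ε k : ℂ) * vSol ρ ε k z +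
        (coefA ρ ε (k - 1) : ℂ) * vSol ρ ε (k - 1) z = -z * vSol ρ ε k z) := by
  constructor
  · intro _
    set a : ℂ := (k : ℂ) + (ε : ℂ) + 1/2 + I * (ρ : ℂ) with ha
    set b : ℂ := 1 + 2 * I * (ρ : ℂ) with hbdef
    have hb : ∀ n : ℕ, b + (n:ℂ) ≠ 0 := by
      intro n h; have := congrArg Complex.im h; simp [hbdef] at this; linarith
    have hb2 : ∀ n : ℕ, 2 - b + (n:ℂ) ≠ 0 := by
      intro n h; have := congrArg Complex.im h; simp [hbdef] at this; linarith
    have ha1 : ∀ m : ℕ, a - 1 + (m:ℂ) ≠ 0 := by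
      intro m h; have := congrArg Complex.im h; simp [ha] at this; linarith
    have hab : ∀ m : ℕ, a - b + (m:ℂ) ≠ 0 := by
      intro m h; have := congrArg Complex.im h; simp [ha, hbdef] at this; linarith
    have h0 : a ≠ 0 := by have := ha1 1; intro h; apply this; rw [h]; push_cast; ring
    have h1 : a - 1 ≠ 0 := by have := ha1 0; simpa using this
    have hU := LagRecAux.USol_rec a b z hb hb2 ha1 hab
    -- abs facts
    have habsA : ‖a‖ = coefA ρ ε k := rfl
    have habsA' : ‖a - 1‖ = coefA ρ ε (k-1) := by
      rw [coefA]; congr 1; push_cast; ring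
    have hconj : (starRingEnd ℂ) a = a - b + 1 := by
      rw [ha, hbdef]; simp [Complex.ext_iff]; ring
    have hA2 : (coefA ρ ε k : ℂ) * (coefA ρ ε k : ℂ) = a * (a - b + 1) := by
      rw [← habsA]
      calc ((‖a‖ : ℝ) : ℂ) * ((‖a‖ : ℝ) : ℂ)
          = ((‖a‖ ^ 2 : ℝ) : ℂ) := by push_cast; ring
        _ = ((Complex.normSq a : ℝ) : ℂ) := by rw [Complex.sq_norm]
        _ = a * (starRingEnd ℂ) a := (Complex.mul_conj a).symm
        _ = a * (a - b + 1) := by rw [hconj]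
    have hGsucc : ((‖Complex.Gamma (a+1)‖ : ℝ) : ℂ)
        = (coefA ρ ε k : ℂ) * ((‖Complex.Gamma a‖ : ℝ) : ℂ) := by
      rw [Complex.Gamma_add_one a h0, norm_mul, habsA]; push_cast; ring
    have hGpred : (coefA ρ ε (k-1) : ℂ) * ((‖Complex.Gamma (a-1)‖ : ℝ) : ℂ)
        = ((‖Complex.Gamma a‖ : ℝ) : ℂ) := by
      have : Complex.Gamma a = (a-1) * Complex.Gamma (a-1) := by
        have := Complex.Gamma_add_one (a-1) h1
        rwa [sub_add_cancel] at this
      rw [this, norm_mul, habsA']; push_cast; ring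
    have hB : (coefB ρ ε k : ℂ) = 2*a - b := by
      rw [coefB, ha, hbdef]; push_cast; ring
    have hsign1 : (-1:ℂ)^(k+1) = -(-1:ℂ)^k := by
      rw [zpow_add₀ (by norm_num : (-1:ℂ) ≠ 0), zpow_one]; ring
    have hsign2 : (-1:ℂ)^(k-1) = -(-1:ℂ)^k := by
      rw [zpow_sub₀ (by norm_num : (-1:ℂ) ≠ 0), zpow_one]; field_simp
    unfold uSol
    rw [show ((k+1:ℤ):ℂ) + (ε:ℂ) + 1/2 + I * (ρ:ℂ) = a + 1 from by rw [ha]; push_cast; ring,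
        show ((k-1:ℤ):ℂ) + (ε:ℂ) + 1/2 + I * (ρ:ℂ) = a - 1 from by rw [ha]; push_cast; ring,
        hsign1, hsign2, hGsucc]
    linear_combination (-(-1:ℂ)^k * ((‖Complex.Gamma a‖ : ℝ) : ℂ)) * hU
      + (-(-1:ℂ)^k * ((‖Complex.Gamma a‖ : ℝ) : ℂ) * USol (a+1) b z) * hA2
      + (-(-1:ℂ)^k * USol (a-1) b z) * hGpred
      + ((-1:ℂ)^k * ((‖Complex.Gamma a‖ : ℝ) : ℂ) * USol a b z) * hB
  · intro _
    set a : ℂ := 1/2 - (k : ℂ) - (ε : ℂ) - I * (ρ : ℂ) with ha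
    set b : ℂ := 1 - 2 * I * (ρ : ℂ) with hbdef
    have hb : ∀ n : ℕ, b + (n:ℂ) ≠ 0 := by
      intro n h; have := congrArg Complex.im h; simp [hbdef] at this; linarith
    have hb2 : ∀ n : ℕ, 2 - b + (n:ℂ) ≠ 0 := by
      intro n h; have := congrArg Complex.im h; simp [hbdef] at this; linarith
    have ha1 : ∀ m : ℕ, a - 1 + (m:ℂ) ≠ 0 := by
      intro m h; have := congrArg Complex.im h; simp [ha] at this; linarith
    have hab : ∀ m : ℕ, a - b + (m:ℂ) ≠ 0 := by
      intro m h; have := congrArg Complex.im h; simp [ha, hbdef] at this; linarith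
    have h0 : a ≠ 0 := by have := ha1 1; intro h; apply this; rw [h]; push_cast; ring
    have h1 : a - 1 ≠ 0 := by have := ha1 0; simpa using this
    have hU := LagRecAux.USol_rec a b (-z) hb hb2 ha1 hab
    have habs1 : ‖a - 1‖ = coefA ρ ε k := by
      rw [coefA, show a - 1 = -((k : ℂ) + (ε : ℂ) + 1/2 + I * (ρ : ℂ)) from by rw [ha]; ring,
        norm_neg]
    have habs0 : ‖a‖ = coefA ρ ε (k-1) := by
      rw [coefA, show a = -(((k-1:ℤ) : ℂ) + (ε : ℂ) + 1/2 + I * (ρ : ℂ)) from by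
        rw [ha]; push_cast; ring, norm_neg]
    have hconj : (starRingEnd ℂ) a = a - b + 1 := by
      rw [ha, hbdef]; simp [Complex.ext_iff]; ring
    have hA2 : (coefA ρ ε (k-1) : ℂ) * (coefA ρ ε (k-1) : ℂ) = a * (a - b + 1) := by
      rw [← habs0]
      calc ((‖a‖ : ℝ) : ℂ) * ((‖a‖ : ℝ) : ℂ)
          = ((‖a‖ ^ 2 : ℝ) : ℂ) := by push_cast; ring
        _ = ((Complex.normSq a : ℝ) : ℂ) := by rw [Complex.sq_norm]
        _ = a * (starRingEnd ℂ) a := (Complex.mul_conj a).symm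
        _ = a * (a - b + 1) := by rw [hconj]
    have hGsucc : ((‖Complex.Gamma (a+1)‖ : ℝ) : ℂ)
        = (coefA ρ ε (k-1) : ℂ) * ((‖Complex.Gamma a‖ : ℝ) : ℂ) := by
      rw [Complex.Gamma_add_one a h0, norm_mul, habs0]; push_cast; ring
    have hGpred : (coefA ρ ε k : ℂ) * ((‖Complex.Gamma (a-1)‖ : ℝ) : ℂ)
        = ((‖Complex.Gamma a‖ : ℝ) : ℂ) := by
      have : Complex.Gamma a = (a-1) * Complex.Gamma (a-1) := by
        have := Complex.Gamma_add_one (a-1) h1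
        rwa [sub_add_cancel] at this
      rw [this, norm_mul, habs1]; push_cast; ring
    have hB : (coefB ρ ε k : ℂ) = b - 2*a := by
      rw [coefB, ha, hbdef]; push_cast; ring
    unfold vSol
    rw [show (1:ℂ)/2 - ((k+1:ℤ):ℂ) - (ε:ℂ) - I * (ρ:ℂ) = a - 1 from by rw [ha]; push_cast; ring,
        show (1:ℂ)/2 - ((k-1:ℤ):ℂ) - (ε:ℂ) - I * (ρ:ℂ) = a + 1 from by rw [ha]; push_cast; ring,
        hGsucc]
    linear_combination (((‖Complex.Gamma a‖ : ℝ) : ℂ)) * hU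
      + (((‖Complex.Gamma a‖ : ℝ) : ℂ) * USol (a+1) b (-z)) * hA2
      + (USol (a-1) b (-z)) * hGpred
      + (((‖Complex.Gamma a‖ : ℝ) : ℂ) * USol a b (-z)) * hB
end
end
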